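/- If F is a cumulative distribution function (monotone nondecreasing, right-continuous, tending to 0 at -∞ and 1 at +∞) satisfying the functional equation F(x) = p·F(x/β) + q·F(x/β + 1 - 1/β) for all real x, then F(x) = 1 for all x ≥ 1. -/

import Mathlib

theorem stmt1 (β p q : ℝ) (hβ0 : 0 < β) (hβ : β ≤ 1/2)
    (hp0 : 0 < p) (hp1 : p < 1) (hq : q = 1 - p)
    (F : ℝ → ℝ) (hmono : Monotone F)
    (hrc : ∀ x : ℝ, ContinuousWithinAt F (Set.Ici x) x)
    (hbot : Filter.Tendsto F Filter.atBot (nhds 0))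
    (htop : Filter.Tendsto F Filter.atTop (nhds 1))
    (hF : ∀ x : ℝ, F x = p * F (x / β) + q * F (x / β + 1 - 1 / β)) :
    ∀ x : ℝ, 1 ≤ x → F x = 1 := by
  subst hq
  have hq0 : 0 < 1 - p := by linarith
  have hc : (1:ℝ) < 1/β := by
    rw [lt_div_iff₀ hβ0]; linarith
  have hle1 : ∀ x : ℝ, F x ≤ 1 := by
    intro x
    refine ge_of_tendsto htop ?_
    filter_upwards [Filter.eventually_ge_atTop x] with y hy
    exact hmono hy
  -- key step: for x ≥ 1, F (x/β) = F x
  have step : ∀ x : ℝ, 1 ≤ x → F (x / β) = F x := by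
    intro x hx
    have ha : x ≤ x / β := by
      rw [le_div_iff₀ hβ0]
      nlinarith
    have hb : x ≤ x / β + 1 - 1 / β := by
      have : x / β - x = x * (1/β - 1) := by field_simp
      nlinarith [mul_le_mul_of_nonneg_right hc.le (by linarith : (0:ℝ) ≤ x - 1)]
    have hFa : F x ≤ F (x / β) := hmono ha
    have hFb : F x ≤ F (x / β + 1 - 1 / β) := hmono hb
    have heq := hF x
    refine le_antisymm ?_ hFa
    by_contra h
    push_neg at h
    nlinarith [mul_pos hp0 (sub_pos.mpr h), mul_nonneg hq0.le (sub_nonneg.mpr hFb)]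
  have key : ∀ n : ℕ, F ((1/β)^n) = F 1 := by
    intro n
    induction n with
    | zero => simp
    | succ n ih =>
      have h1x : 1 ≤ (1/β)^n := one_le_pow₀ hc.le
      have : ((1:ℝ)/β)^(n+1) = ((1/β)^n) / β := by
        rw [pow_succ]; field_simp
      rw [this, step _ h1x, ih]
  have hF1 : F 1 = 1 := by
    have h2 : Filter.Tendsto (fun n : ℕ => F ((1/β)^n)) Filter.atTop (nhds 1) :=
      htop.comp (tendsto_pow_atTop_atTop_of_one_lt hc)
    have h3 : Filter.Tendsto (fun _ : ℕ => F 1) Filter.atTop (nhds 1) := by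
      refine h2.congr fun n => key n
    exact tendsto_nhds_unique tendsto_const_nhds h3
  intro x hx
  exact le_antisymm (hle1 x) (hF1 ▸ hmono hx)
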